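/- Let C₁ be a measurable space, let Θ and Φ be measurable spaces, let δ₂ : Θ × Φ → Z be a measurable embedding into a measurable space Z, let γ : C₁ → Θ × Φ be measurable, and set δ₁ = δ₂ ∘ γ. Let π₁ be a probability measure on C₁, and let π₂ = ν ⊗ ρ be a product probability measure on Θ × Φ. If (δ₁)_#π₁ = (δ₂)_#π₂, then γ_#π₁ = ν ⊗ ρ; in particular the pushforward prior γ_#π₁ is a product (separable) measure on Θ × Φ. -/
import Mathlib

open MeasureTheory

/-- Parametrised form: if `δ₂ : Θ × Φ → Z` is a measurable embedding,
`γ : C₁ → Θ × Φ` is measurable, `δ₁ = δ₂ ∘ γ`, the prior `π₂` is a product measure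
`ν ⊗ ρ`, and the pushforward data distributions coincide, then `γ_#π₁ = ν ⊗ ρ`,
i.e. the pushforward prior is a product (separable) measure. -/
theorem map_prior_eq_prod_of_pushforward_eq
    {C₁ Θ Φ Z : Type*} [MeasurableSpace C₁] [MeasurableSpace Θ] [MeasurableSpace Φ]
    [MeasurableSpace Z]
    (δ₂ : Θ × Φ → Z) (hδ₂ : MeasurableEmbedding δ₂)
    (γ : C₁ → Θ × Φ) (hγ : Measurable γ)
    (δ₁ : C₁ → Z) (hδ₁ : δ₁ = δ₂ ∘ γ)
    (π₁ : Measure C₁) [IsProbabilityMeasure π₁]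
    (ν : Measure Θ) (ρ : Measure Φ)
    [IsProbabilityMeasure ν] [IsProbabilityMeasure ρ]
    (heq : π₁.map δ₁ = (ν.prod ρ).map δ₂) :
    π₁.map γ = ν.prod ρ := by
  have h : (π₁.map γ).map δ₂ = (ν.prod ρ).map δ₂ := by
    rw [Measure.map_map hδ₂.measurable hγ, ← hδ₁, heq]
  have := congrArg (Measure.comap δ₂) h
  rwa [hδ₂.comap_map, hδ₂.comap_map] at this
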